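/- Let X, Y ∈ ℂ^{N×N} and C₁(λ) = λX + Y be an invertible pencil at λ ∈ ℂ. The backward error η₂(λ, C₁) := min{‖(‖ΔY‖_F, ‖ΔX‖_F)‖₂ : det(C₁(λ) + ΔY + λΔX) = 0} satisfies η₂(λ, C₁) = σ_min(C₁(λ)) / ‖(1, λ)‖₂. -/

import Mathlib

open Matrix BigOperators

noncomputable def evnorm {n : Type*} [Fintype n] (v : n → ℂ) : ℝ :=
  Real.sqrt (∑ i, ‖v i‖ ^ 2)

noncomputable def frob {m n : Type*} [Fintype m] [Fintype n] (M : Matrix m n ℂ) : ℝ :=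
  Real.sqrt (∑ i, ∑ j, ‖M i j‖ ^ 2)

noncomputable def sigmaMax {m n : Type*} [Fintype m] [Fintype n] (T : Matrix m n ℂ) : ℝ :=
  sSup {x | ∃ v, evnorm v = 1 ∧ x = evnorm (T.mulVec v)}

noncomputable def sigmaMin {m n : Type*} [Fintype m] [Fintype n] (T : Matrix m n ℂ) : ℝ :=
  sInf {x | ∃ v, evnorm v = 1 ∧ x = evnorm (T.mulVec v)}

def hcat3 {i a b c : Type*} (A : Matrix i a ℂ) (B : Matrix i b ℂ) (C : Matrix i c ℂ) :
    Matrix i (a ⊕ b ⊕ c) ℂ :=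
  Matrix.of fun x j => match j with
    | Sum.inl j => A x j
    | Sum.inr (Sum.inl j) => B x j
    | Sum.inr (Sum.inr j) => C x j

def vcat3 {a b c j : Type*} (A : Matrix a j ℂ) (B : Matrix b j ℂ) (C : Matrix c j ℂ) :
    Matrix (a ⊕ b ⊕ c) j ℂ :=
  Matrix.of fun i y => match i with
    | Sum.inl i => A i y
    | Sum.inr (Sum.inl i) => B i y
    | Sum.inr (Sum.inr i) => C i y

noncomputable def Lnorm (m : ℕ) (μ : ℂ) : ℝ :=
  Real.sqrt (∑ i ∈ Finset.range (m + 1), ‖μ‖ ^ (2 * i))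

section helpers
variable {n m : Type*} [Fintype n] [Fintype m]

lemma evnorm_nonneg (v : n → ℂ) : 0 ≤ evnorm v := Real.sqrt_nonneg _

lemma frob_nonneg (M : Matrix m n ℂ) : 0 ≤ frob M := Real.sqrt_nonneg _

lemma evnorm_eq_norm (v : n → ℂ) :
    evnorm v = ‖(WithLp.equiv 2 (n → ℂ)).symm v‖ := by
  rw [EuclideanSpace.norm_eq]; simp [evnorm]

lemma sq_evnorm (v : n → ℂ) : evnorm v ^ 2 = ∑ i, ‖v i‖ ^ 2 :=
  Real.sq_sqrt (Finset.sum_nonneg fun i _ => by positivity)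

lemma evnorm_eq_zero {v : n → ℂ} : evnorm v = 0 ↔ v = 0 := by
  rw [evnorm_eq_norm, norm_eq_zero]
  exact ⟨fun h => by simpa using (WithLp.equiv 2 (n → ℂ)).symm.injective (h.trans rfl),
    fun h => by simp [h]⟩

lemma evnorm_smul (c : ℂ) (v : n → ℂ) : evnorm (c • v) = ‖c‖ * evnorm v := by
  rw [evnorm_eq_norm, evnorm_eq_norm, ← norm_smul]
  congr 1

lemma evnorm_neg (v : n → ℂ) : evnorm (-v) = evnorm v := by
  simp [evnorm]

lemma evnorm_add_le (u v : n → ℂ) : evnorm (u + v) ≤ evnorm u + evnorm v := by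
  rw [evnorm_eq_norm, evnorm_eq_norm, evnorm_eq_norm]
  exact norm_add_le _ _

lemma evnorm_mulVec_le (M : Matrix m n ℂ) {v : n → ℂ} (hv : evnorm v = 1) :
    evnorm (M.mulVec v) ≤ frob M := by
  have hv2 : ∑ j, ‖v j‖ ^ 2 = 1 := by
    have h := sq_evnorm v; rw [hv] at h; simpa using h.symm
  unfold evnorm frob
  apply Real.sqrt_le_sqrt
  apply Finset.sum_le_sum
  intro i _
  have h1 : ‖M.mulVec v i‖ ≤ ∑ j, ‖M i j‖ * ‖v j‖ := by
    refine (norm_sum_le _ _).trans ?_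
    exact Finset.sum_le_sum fun j _ => by rw [norm_mul]
  calc ‖M.mulVec v i‖ ^ 2 ≤ (∑ j, ‖M i j‖ * ‖v j‖) ^ 2 := by
        apply pow_le_pow_left₀ (norm_nonneg _) h1
    _ ≤ (∑ j, ‖M i j‖ ^ 2) * ∑ j, ‖v j‖ ^ 2 := Finset.sum_mul_sq_le_sq_mul_sq _ _ _
    _ = ∑ j, ‖M i j‖ ^ 2 := by rw [hv2, mul_one]

lemma frob_smul (c : ℂ) (M : Matrix m n ℂ) : frob (c • M) = ‖c‖ * frob M := by
  unfold frob
  rw [← Real.sqrt_sq (norm_nonneg c), ← Real.sqrt_mul (by positivity)]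
  congr 1
  rw [Finset.mul_sum]
  refine Finset.sum_congr rfl fun i _ => ?_
  rw [Finset.mul_sum]
  refine Finset.sum_congr rfl fun j _ => ?_
  simp [norm_mul, mul_pow]

lemma frob_vecMulVec (w : m → ℂ) (u : n → ℂ) :
    frob (Matrix.vecMulVec w u) = evnorm w * evnorm u := by
  unfold frob evnorm
  rw [← Real.sqrt_mul (by positivity)]
  congr 1
  rw [Finset.sum_mul_sum]
  refine Finset.sum_congr rfl fun i _ => Finset.sum_congr rfl fun j _ => ?_
  simp [Matrix.vecMulVec_apply, norm_mul, mul_pow]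

lemma vecMulVec_mulVec' (w : m → ℂ) (u v : n → ℂ) :
    (Matrix.vecMulVec w u).mulVec v = (u ⬝ᵥ v) • w := by
  funext i
  simp only [Matrix.mulVec, dotProduct, Matrix.vecMulVec_apply, Pi.smul_apply,
    smul_eq_mul, Finset.sum_mul]
  exact Finset.sum_congr rfl fun j _ => by ring

lemma two_cs (a b mu : ℝ) (ha : 0 ≤ a) (hb : 0 ≤ b) (hm : 0 ≤ mu) :
    a + mu * b ≤ Real.sqrt (1 + mu ^ 2) * Real.sqrt (a ^ 2 + b ^ 2) := by
  rw [← Real.sqrt_mul (by positivity)]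
  rw [show a + mu * b = Real.sqrt ((a + mu * b) ^ 2) from (Real.sqrt_sq (by positivity)).symm]
  apply Real.sqrt_le_sqrt
  nlinarith [sq_nonneg (mu * a - b)]

end helpers

lemma mul_conj_eq (μ : ℂ) : μ * (starRingEnd ℂ μ) = ((‖μ‖ ^ 2 : ℝ) : ℂ) := by
  rw [Complex.mul_conj]
  norm_cast
  rw [Complex.normSq_eq_norm_sq]

theorem stmt14 {N : ℕ} (μ : ℂ) (X Y : Matrix (Fin N) (Fin N) ℂ)
    (h : IsUnit (μ • X + Y)) :
    sInf {x | ∃ ΔX ΔY : Matrix (Fin N) (Fin N) ℂ,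
        (μ • X + Y + ΔY + μ • ΔX).det = 0 ∧
        x = Real.sqrt (frob ΔY ^ 2 + frob ΔX ^ 2)} =
      sigmaMin (μ • X + Y) / Real.sqrt (1 + ‖μ‖ ^ 2) := by
  classical
  rcases Nat.eq_zero_or_pos N with hN | hN
  · subst hN
    have h1 : {x | ∃ ΔX ΔY : Matrix (Fin 0) (Fin 0) ℂ,
        (μ • X + Y + ΔY + μ • ΔX).det = 0 ∧
        x = Real.sqrt (frob ΔY ^ 2 + frob ΔX ^ 2)} = (∅ : Set ℝ) := by
      ext x
      simp [Matrix.det_fin_zero]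
    have h2 : {x | ∃ v : Fin 0 → ℂ, evnorm v = 1 ∧
        x = evnorm ((μ • X + Y).mulVec v)} = (∅ : Set ℝ) := by
      ext x
      simp [evnorm]
    rw [h1, sigmaMin, h2, Real.sInf_empty, zero_div]
  · set A := μ • X + Y with hAdef
    set s : ℝ := Real.sqrt (1 + ‖μ‖ ^ 2) with hsdef
    have hs0 : 0 < s := Real.sqrt_pos.mpr (by positivity)
    set S := {x | ∃ ΔX ΔY : Matrix (Fin N) (Fin N) ℂ,
        (A + ΔY + μ • ΔX).det = 0 ∧
        x = Real.sqrt (frob ΔY ^ 2 + frob ΔX ^ 2)} with hSdef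
    set T := {x | ∃ v : Fin N → ℂ, evnorm v = 1 ∧ x = evnorm (A.mulVec v)} with hTdef
    have hsig : sigmaMin A = sInf T := by rw [hTdef]; rfl
    have i0 : Fin N := ⟨0, hN⟩
    have he : evnorm (Pi.single i0 (1:ℂ) : Fin N → ℂ) = 1 := by
      have hsum : ∑ i, ‖(Pi.single i0 (1:ℂ) : Fin N → ℂ) i‖ ^ 2 = 1 := by
        rw [Finset.sum_eq_single i0]
        · simp
        · intro b _ hb; simp [Pi.single_apply, hb]
        · simp
      unfold evnorm
      rw [hsum, Real.sqrt_one]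
    have hTne : T.Nonempty := ⟨_, _, he, rfl⟩
    have hTbdd : BddBelow T := ⟨0, fun x ⟨v, _, hx⟩ => hx ▸ evnorm_nonneg _⟩
    -- construction of the optimal perturbation
    have hconstruct : ∀ v : Fin N → ℂ, evnorm v = 1 → evnorm (A.mulVec v) / s ∈ S := by
      intro v hv
      have hv0 : v ≠ 0 := by
        intro hv0
        rw [hv0, evnorm_eq_zero.mpr rfl] at hv
        exact zero_ne_one hv
      set w := A.mulVec v with hw
      set t : ℝ := (1 + ‖μ‖ ^ 2)⁻¹ with ht
      have ht0 : 0 < t := by positivity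
      have htt : t * (1 + ‖μ‖ ^ 2) = 1 := inv_mul_cancel₀ (by positivity)
      set R := Matrix.vecMulVec w (star v) with hR
      have hcoef : (-(t:ℂ)) + μ * (-(t:ℂ) * (starRingEnd ℂ μ)) = -1 := by
        have h2 : (-(t:ℂ)) + μ * (-(t:ℂ) * (starRingEnd ℂ μ))
            = -((t:ℂ) * (1 + μ * (starRingEnd ℂ μ))) := by ring
        rw [h2, mul_conj_eq]
        rw [show ((1:ℂ) + ((‖μ‖ ^ 2 : ℝ):ℂ)) = (((1 + ‖μ‖ ^ 2 : ℝ)):ℂ) by push_cast; ring]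
        rw [show (t:ℂ) * (((1 + ‖μ‖ ^ 2 : ℝ)):ℂ) = (((t * (1 + ‖μ‖ ^ 2) : ℝ)):ℂ) by push_cast; ring]
        rw [htt]
        norm_num
      have hv2 : ∑ j, ‖v j‖ ^ 2 = 1 := by
        have h := sq_evnorm v; rw [hv] at h; simpa using h.symm
      have hsv : star v ⬝ᵥ v = 1 := by
        have hterm : ∀ j, (starRingEnd ℂ) (v j) * v j = ((‖v j‖ ^ 2 : ℝ) : ℂ) := fun j => by
          rw [mul_comm]; exact mul_conj_eq (v j)
        simp only [dotProduct, Pi.star_apply, RCLike.star_def, hterm]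
        rw [← Complex.ofReal_sum, hv2, Complex.ofReal_one]
      refine ⟨(-(t:ℂ) * (starRingEnd ℂ μ)) • R, (-(t:ℂ)) • R, ?_, ?_⟩
      · rw [← Matrix.exists_mulVec_eq_zero_iff]
        refine ⟨v, hv0, ?_⟩
        rw [Matrix.add_mulVec, Matrix.add_mulVec, Matrix.smul_mulVec,
          Matrix.smul_mulVec, Matrix.smul_mulVec, hR, vecMulVec_mulVec',
          hsv, one_smul]
        funext i
        simp only [Pi.add_apply, Pi.smul_apply, Pi.zero_apply, smul_eq_mul]
        linear_combination w i * hcoef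
      · have hstar : evnorm (star v) = 1 := by
          unfold evnorm at hv ⊢
          simpa using hv
        have hfR : frob R = evnorm w := by rw [hR, frob_vecMulVec, hstar, mul_one]
        rw [frob_smul, frob_smul, hfR]
        have h1 : ‖(-(t:ℂ))‖ = t := by
          rw [norm_neg, Complex.norm_real, Real.norm_eq_abs, abs_of_pos ht0]
        have h2 : ‖(-(t:ℂ) * starRingEnd ℂ μ)‖ = t * ‖μ‖ := by
          rw [norm_mul, h1, RCLike.norm_conj]
        rw [h1, h2]
        have hpos : (0:ℝ) < 1 + ‖μ‖ ^ 2 := by positivity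
        have key : (t * evnorm w) ^ 2 + (t * ‖μ‖ * evnorm w) ^ 2 = (evnorm w / s) ^ 2 := by
          rw [div_pow, hsdef, Real.sq_sqrt hpos.le, ht]
          field_simp
        rw [key, Real.sqrt_sq (div_nonneg (evnorm_nonneg _) hs0.le)]
    have hSne : S.Nonempty := ⟨_, hconstruct _ he⟩
    have hSbdd : BddBelow S := ⟨0, fun x ⟨ΔX', ΔY', _, hx⟩ => hx ▸ Real.sqrt_nonneg _⟩
    rw [hsig]
    refine le_antisymm ?_ ?_
    · -- upper bound
      refine le_of_forall_pos_le_add fun ε hε => ?_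
      have hlt : sInf T < sInf T + ε * s := by nlinarith
      obtain ⟨y, ⟨v, hv1, hy⟩, hylt⟩ := exists_lt_of_csInf_lt hTne hlt
      have hle1 : sInf S ≤ evnorm (A.mulVec v) / s := csInf_le hSbdd (hconstruct v hv1)
      have hle2 : evnorm (A.mulVec v) / s ≤ (sInf T + ε * s) / s := by
        gcongr
        rw [← hy]
        exact hylt.le
      have heq : (sInf T + ε * s) / s = sInf T / s + ε := by
        rw [add_div, mul_div_assoc, div_self hs0.ne', mul_one]
      exact hle1.trans (hle2.trans_eq heq)
    · -- lower bound
      apply le_csInf hSne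
      rintro x ⟨ΔX', ΔY', hdet, rfl⟩
      rw [div_le_iff₀ hs0]
      obtain ⟨v, hv0, hker⟩ := Matrix.exists_mulVec_eq_zero_iff.mpr hdet
      have hev0 : 0 < evnorm v :=
        lt_of_le_of_ne (evnorm_nonneg v) fun hc => hv0 (evnorm_eq_zero.mp hc.symm)
      set u := (((evnorm v)⁻¹ : ℝ) : ℂ) • v with hu
      have hu1 : evnorm u = 1 := by
        rw [hu, evnorm_smul, Complex.norm_real, Real.norm_eq_abs,
          abs_of_pos (inv_pos.mpr hev0), inv_mul_cancel₀ hev0.ne']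
      have hkeru : (A + ΔY' + μ • ΔX').mulVec u = 0 := by
        rw [hu, Matrix.mulVec_smul, hker, smul_zero]
      have hAu : A.mulVec u = -((ΔY' + μ • ΔX').mulVec u) := by
        apply eq_neg_of_add_eq_zero_left
        rw [← Matrix.add_mulVec, ← add_assoc]
        exact hkeru
      have hTle : sInf T ≤ evnorm (A.mulVec u) := csInf_le hTbdd ⟨u, hu1, rfl⟩
      calc sInf T ≤ evnorm (A.mulVec u) := hTle
        _ = evnorm ((ΔY' + μ • ΔX').mulVec u) := by rw [hAu, evnorm_neg]
        _ ≤ evnorm (ΔY'.mulVec u) + evnorm ((μ • ΔX').mulVec u) := by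
            rw [Matrix.add_mulVec]; exact evnorm_add_le _ _
        _ = evnorm (ΔY'.mulVec u) + ‖μ‖ * evnorm (ΔX'.mulVec u) := by
            rw [Matrix.smul_mulVec, evnorm_smul]
        _ ≤ frob ΔY' + ‖μ‖ * frob ΔX' := by
            have hY := evnorm_mulVec_le ΔY' hu1
            have hX := evnorm_mulVec_le ΔX' hu1
            gcongr
        _ ≤ Real.sqrt (1 + ‖μ‖ ^ 2) * Real.sqrt (frob ΔY' ^ 2 + frob ΔX' ^ 2) :=
            two_cs _ _ _ (frob_nonneg _) (frob_nonneg _) (norm_nonneg _)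
        _ = Real.sqrt (frob ΔY' ^ 2 + frob ΔX' ^ 2) * s := by rw [hsdef, mul_comm]
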